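/- For all integers n ≥ 3 and m ≥ 2, the outer automorphism group Out(G_{n,m}) is infinite. -/

import Mathlib

/-- The additive group of `n × m` integer matrices. -/
abbrev MatZ (n m : ℕ) := Matrix (Fin n) (Fin m) ℤ

/-- The action of `SL_n(ℤ)` on `Mat_{n×m}(ℤ)` by left multiplication, as a homomorphism
into the automorphisms of the (multiplicatively written) additive group `Mat_{n×m}(ℤ)`. -/
def slAction (n m : ℕ) :
    Matrix.SpecialLinearGroup (Fin n) ℤ →* MulAut (Multiplicative (MatZ n m)) where
  toFun A :=
    AddEquiv.toMultiplicative
      { toFun := fun X => (A : Matrix (Fin n) (Fin n) ℤ) * X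
        invFun := fun X => ((A⁻¹ : Matrix.SpecialLinearGroup (Fin n) ℤ) :
            Matrix (Fin n) (Fin n) ℤ) * X
        left_inv := fun X => by
          show _ * (_ * _) = _
          rw [← Matrix.mul_assoc, ← Matrix.SpecialLinearGroup.coe_mul, inv_mul_cancel,
            Matrix.SpecialLinearGroup.coe_one, Matrix.one_mul]
        right_inv := fun X => by
          show _ * (_ * _) = _
          rw [← Matrix.mul_assoc, ← Matrix.SpecialLinearGroup.coe_mul, mul_inv_cancel,
            Matrix.SpecialLinearGroup.coe_one, Matrix.one_mul]
        map_add' := fun X Y => Matrix.mul_add _ _ _ }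
  map_one' := by
    ext X : 1
    exact congrArg Multiplicative.ofAdd (Matrix.one_mul _)
  map_mul' A B := by
    ext X : 1
    show Multiplicative.ofAdd (((A * B : Matrix.SpecialLinearGroup (Fin n) ℤ) :
        Matrix (Fin n) (Fin n) ℤ) * Multiplicative.toAdd X) = Multiplicative.ofAdd
        ((A : Matrix (Fin n) (Fin n) ℤ) * ((B : Matrix (Fin n) (Fin n) ℤ) * Multiplicative.toAdd X))
    rw [Matrix.SpecialLinearGroup.coe_mul, Matrix.mul_assoc]

/-- The group `G_{n,m} = SL_n(ℤ) ⋉ Mat_{n×m}(ℤ)`. -/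
abbrev GG (n m : ℕ) :=
  SemidirectProduct (Multiplicative (MatZ n m)) (Matrix.SpecialLinearGroup (Fin n) ℤ)
    (slAction n m)

section Aux

variable {n m : ℕ}

@[simp] lemma slAction_apply (A : Matrix.SpecialLinearGroup (Fin n) ℤ)
    (x : Multiplicative (MatZ n m)) :
    slAction n m A x = Multiplicative.ofAdd
      ((A : Matrix (Fin n) (Fin n) ℤ) * Multiplicative.toAdd x) := rfl

/-- Right multiplication by a fixed `m × m` matrix, as an endomorphism of `GG n m`. -/
def rmulHom (n m : ℕ) (S : Matrix (Fin m) (Fin m) ℤ) : GG n m →* GG n m where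
  toFun g := ⟨Multiplicative.ofAdd (Multiplicative.toAdd g.left * S), g.right⟩
  map_one' := by
    ext : 1
    · show Multiplicative.ofAdd ((0 : MatZ n m) * S) = _
      simp [SemidirectProduct.one_left]
    · rfl
  map_mul' g h := by
    ext : 1
    · show Multiplicative.ofAdd
        ((Multiplicative.toAdd (g.left * slAction n m g.right h.left)) * S) = _
      rw [SemidirectProduct.mul_left]
      show _ = Multiplicative.ofAdd (Multiplicative.toAdd g.left * S) *
        slAction n m g.right (Multiplicative.ofAdd (Multiplicative.toAdd h.left * S))
      simp only [slAction_apply, toAdd_mul, toAdd_ofAdd]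
      rw [← ofAdd_add]
      congr 1
      rw [Matrix.add_mul, Matrix.mul_assoc]
    · rfl
  
/-- The unipotent matrix `1 + k E_{01}`. -/
def EE (m : ℕ) (hm : 2 ≤ m) (k : ℤ) : Matrix (Fin m) (Fin m) ℤ :=
  1 + Matrix.single ⟨0, by omega⟩ ⟨1, by omega⟩ k

lemma EE_mul (hm : 2 ≤ m) (k l : ℤ) : EE m hm k * EE m hm l = EE m hm (k + l) := by
  unfold EE
  have h : (⟨1, by omega⟩ : Fin m) ≠ ⟨0, by omega⟩ := by
    simp [Fin.ext_iff]
  have h0 : Matrix.single (⟨0, by omega⟩ : Fin m) (⟨1, by omega⟩ : Fin m) k *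
      Matrix.single (⟨0, by omega⟩ : Fin m) (⟨1, by omega⟩ : Fin m) l = 0 :=
    Matrix.single_mul_single_of_ne _ _ _ (c := k) h l
  simp only [Matrix.add_mul, Matrix.mul_add, Matrix.one_mul, Matrix.mul_one,
    h0, Matrix.single_add, add_zero]
  abel

lemma EE_zero (hm : 2 ≤ m) : EE m hm 0 = 1 := by simp [EE]

lemma rmulHom_comp (S T : Matrix (Fin m) (Fin m) ℤ) (g : GG n m) :
    rmulHom n m S (rmulHom n m T g) = rmulHom n m (T * S) g := by
  ext : 1
  · show Multiplicative.ofAdd (Multiplicative.toAdd (Multiplicative.ofAdd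
      (Multiplicative.toAdd g.left * T)) * S) = _
    rw [toAdd_ofAdd, Matrix.mul_assoc]
    rfl
  · rfl

/-- The automorphism of `GG n m` given by right multiplication by `EE m hm k`. -/
def rmulAut (n m : ℕ) (hm : 2 ≤ m) (k : ℤ) : MulAut (GG n m) :=
  { rmulHom n m (EE m hm k) with
    invFun := rmulHom n m (EE m hm (-k))
    left_inv := fun g => by
      show rmulHom n m _ (rmulHom n m _ g) = g
      rw [rmulHom_comp, EE_mul, add_neg_cancel, EE_zero]
      ext : 1
      · show Multiplicative.ofAdd (Multiplicative.toAdd g.left * 1) = _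
        rw [Matrix.mul_one, ofAdd_toAdd]
      · rfl
    right_inv := fun g => by
      show rmulHom n m _ (rmulHom n m _ g) = g
      rw [rmulHom_comp, EE_mul, neg_add_cancel, EE_zero]
      ext : 1
      · show Multiplicative.ofAdd (Multiplicative.toAdd g.left * 1) = _
        rw [Matrix.mul_one, ofAdd_toAdd]
      · rfl }

end Aux

/-- For `n ≥ 3` and `m ≥ 2`, the outer automorphism group of
`G_{n,m} = SL_n(ℤ) ⋉ Mat_{n×m}(ℤ)` — the quotient of `Aut(G_{n,m})` by the inner
automorphisms (the range of `MulAut.conj`) — is infinite. -/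
theorem stmt_4 (n m : ℕ) (hn : 3 ≤ n) (hm : 2 ≤ m) :
    Infinite (MulAut (GG n m) ⧸ (MulAut.conj (G := GG n m)).range) := by
  have h01 : (⟨0, by omega⟩ : Fin m) ≠ ⟨1, by omega⟩ := by simp [Fin.ext_iff]
  -- the key: if `rmulAut n m hm j` is inner then `j = 0`
  have key : ∀ j : ℤ, (rmulAut n m hm j ∈ (MulAut.conj (G := GG n m)).range) → j = 0 := by
    intro j hj
    obtain ⟨g, hg⟩ := hj
    -- evaluate at inl (stdBasisMatrix 0 0 1)
    set X₀ : MatZ n m := Matrix.single ⟨0, by omega⟩ ⟨0, by omega⟩ 1 with hX₀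
    have h1 : MulAut.conj g (SemidirectProduct.inl (Multiplicative.ofAdd X₀)) =
        rmulAut n m hm j (SemidirectProduct.inl (Multiplicative.ofAdd X₀)) := by rw [hg]
    rw [MulAut.conj_apply] at h1
    have h2 : g * SemidirectProduct.inl (Multiplicative.ofAdd X₀) =
        rmulAut n m hm j (SemidirectProduct.inl (Multiplicative.ofAdd X₀)) * g := by
      rw [← h1]; group
    have h3 := congrArg SemidirectProduct.left h2
    rw [SemidirectProduct.mul_left, SemidirectProduct.mul_left] at h3
    have hr : (rmulAut n m hm j (SemidirectProduct.inl (Multiplicative.ofAdd X₀))) =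
        SemidirectProduct.inl (Multiplicative.ofAdd (X₀ * EE m hm j)) := by
      ext
      · rfl
      · rfl
    rw [hr] at h3
    simp only [SemidirectProduct.left_inl, SemidirectProduct.right_inl, slAction_apply,
      map_one, toAdd_ofAdd] at h3
    -- h3 : g.left * ofAdd (g.right * X₀) = ofAdd (X₀ * EE) * g.left
    have h4 : Multiplicative.toAdd g.left + (g.right : Matrix (Fin n) (Fin n) ℤ) * X₀ =
        X₀ * EE m hm j + Multiplicative.toAdd g.left := congrArg Multiplicative.toAdd h3
    have h5 : (g.right : Matrix (Fin n) (Fin n) ℤ) * X₀ = X₀ * EE m hm j := by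
      have h4' := h4
      rw [add_comm (Multiplicative.toAdd g.left)] at h4'
      exact add_right_cancel h4'
    have h6 := congrFun (congrFun h5 ⟨0, by omega⟩) ⟨1, by omega⟩
    rw [Matrix.mul_apply, Matrix.mul_apply] at h6
    have hl : ∀ l : Fin n, (g.right : Matrix (Fin n) (Fin n) ℤ) ⟨0, by omega⟩ l *
        X₀ l ⟨1, by omega⟩ = 0 := by
      intro l
      rw [hX₀]
      rw [Matrix.single]
      simp [h01.symm, Fin.ext_iff]
    rw [Finset.sum_congr rfl (fun l _ => hl l), Finset.sum_const_zero] at h6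
    have hrsum : ∑ l, X₀ ⟨0, by omega⟩ l * EE m hm j l ⟨1, by omega⟩ = j := by
      rw [hX₀]
      rw [Finset.sum_eq_single (⟨0, by omega⟩ : Fin m)]
      · rw [Matrix.single]
        simp [EE, Matrix.one_apply, h01, Fin.ext_iff]
      · intro b _ hb
        rw [Matrix.single]
        simp [hb.symm]
      · simp
    rw [hrsum] at h6
    omega
  -- now build an injection ℤ → quotient
  refine Infinite.of_injective
    (fun k : ℤ => (QuotientGroup.mk (rmulAut n m hm k) :
      MulAut (GG n m) ⧸ (MulAut.conj (G := GG n m)).range)) ?_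
  intro k l hkl
  rw [QuotientGroup.eq] at hkl
  have hprod : (rmulAut n m hm k)⁻¹ * rmulAut n m hm l = rmulAut n m hm (l + -k) := by
    apply MulEquiv.ext
    intro g
    show rmulHom n m (EE m hm (-k)) (rmulHom n m (EE m hm l) g) =
      rmulHom n m (EE m hm (l + -k)) g
    rw [rmulHom_comp, EE_mul]
  rw [hprod] at hkl
  have := key _ hkl
  omega
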